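/- Let (p_n)_{n≥1} and (q_n)_{n≥1} be real sequences. For a composition γ of n, set r̃_γ := ∑ p_α q_β, the sum over all pairs (α, β) of compositions of n with α ∧ β = γ. Then for all compositions γ ⊨ n and γ' ⊨ n', r̃_{γ·γ'} = r̃_γ · r̃_{γ'}, where γ·γ' is the concatenation, a composition of n + n'. -/

import Mathlib

open scoped Classical

/-- Concatenation of compositions: `(α · α') ⊨ n + n'` for `α ⊨ n`, `α' ⊨ n'`. -/
def Composition.cat {n n' : ℕ} (α : Composition n) (α' : Composition n') :
    Composition (n + n') where
  blocks := α.blocks ++ α'.blocks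
  blocks_pos hi := by
    rcases List.mem_append.1 hi with h | h
    · exact α.blocks_pos h
    · exact α'.blocks_pos h
  blocks_sum := by rw [List.sum_append, α.blocks_sum, α'.blocks_sum]

/-- The meet `α ∧ β` of two compositions of `n`: the composition whose set of
(proper) partial sums is the intersection of those of `α` and `β`. -/
noncomputable def Composition.meet {n : ℕ} (α β : Composition n) : Composition n :=
  (compositionEquiv n).symm
    { boundaries := α.toCompositionAsSet.boundaries ∩ β.toCompositionAsSet.boundaries
      zero_mem := Finset.mem_inter.2
        ⟨α.toCompositionAsSet.zero_mem, β.toCompositionAsSet.zero_mem⟩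
      getLast_mem := Finset.mem_inter.2
        ⟨α.toCompositionAsSet.getLast_mem, β.toCompositionAsSet.getLast_mem⟩ }

/-- `r̃_γ := ∑_{α ∧ β = γ} p_α q_β`, the sum over pairs of compositions of `n`
whose meet is `γ`. -/
noncomputable def rTilde (p q : ℕ → ℝ) {n : ℕ} (γ : Composition n) : ℝ :=
  ∑ x : Composition n × Composition n,
    if x.1.meet x.2 = γ then (x.1.blocks.map p).prod * (x.2.blocks.map q).prod else 0

namespace Composition

/-- The set of partial sums of a composition (including `0` and `m`), as a `Finset ℕ`. -/
noncomputable def psums {m : ℕ} (α : Composition m) : Finset ℕ :=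
  α.toCompositionAsSet.boundaries.image Fin.val

lemma mem_psums {m : ℕ} {α : Composition m} {k : ℕ} :
    k ∈ α.psums ↔ ∃ i ≤ α.blocks.length, (α.blocks.take i).sum = k := by
  have hcard : α.toCompositionAsSet.boundaries.card = α.blocks.length + 1 := by
    rw [CompositionAsSet.card_boundaries_eq_succ_length, α.toCompositionAsSet_length]
  constructor
  · intro hk
    rw [psums, Finset.mem_image] at hk
    obtain ⟨j, hj, rfl⟩ := hk
    obtain ⟨i, hi, hsum⟩ :=
      α.toCompositionAsSet.mem_boundaries_iff_exists_blocks_sum_take_eq.1 hj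
    rw [α.toCompositionAsSet_blocks] at hsum
    exact ⟨i, by omega, hsum⟩
  · rintro ⟨i, hi, rfl⟩
    have hle : (α.blocks.take i).sum ≤ m := by
      have h2 : (α.blocks.take i).sum + (α.blocks.drop i).sum = m := by
        rw [← List.sum_append, List.take_append_drop]
        exact α.blocks_sum
      omega
    rw [psums, Finset.mem_image]
    refine ⟨⟨(α.blocks.take i).sum, Nat.lt_succ_of_le hle⟩, ?_, rfl⟩
    rw [α.toCompositionAsSet.mem_boundaries_iff_exists_blocks_sum_take_eq]
    exact ⟨i, by omega, by rw [α.toCompositionAsSet_blocks]⟩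

lemma zero_mem_psums {m : ℕ} (α : Composition m) : 0 ∈ α.psums :=
  mem_psums.2 ⟨0, Nat.zero_le _, by simp⟩

lemma top_mem_psums {m : ℕ} (α : Composition m) : m ∈ α.psums :=
  mem_psums.2 ⟨α.blocks.length, le_rfl, by rw [List.take_length]; exact α.blocks_sum⟩

lemma le_of_mem_psums {m : ℕ} {α : Composition m} {k : ℕ} (hk : k ∈ α.psums) : k ≤ m := by
  obtain ⟨i, _, rfl⟩ := mem_psums.1 hk
  have h2 : (α.blocks.take i).sum + (α.blocks.drop i).sum = m := by
    rw [← List.sum_append, List.take_append_drop]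
    exact α.blocks_sum
  omega

lemma psums_injective {m : ℕ} {α β : Composition m} (h : α.psums = β.psums) : α = β := by
  have hb : α.toCompositionAsSet.boundaries = β.toCompositionAsSet.boundaries :=
    Finset.image_injective Fin.val_injective h
  have : α.toCompositionAsSet = β.toCompositionAsSet := by
    cases' ha : α.toCompositionAsSet with B1 z1 l1
    cases' hbb : β.toCompositionAsSet with B2 z2 l2
    rw [ha, hbb] at hb
    simp only at hb
    subst hb
    rfl
  exact (compositionEquiv m).injective this

lemma psums_meet {m : ℕ} (α β : Composition m) :
    (α.meet β).psums = α.psums ∩ β.psums := by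
  have hB : (α.meet β).toCompositionAsSet.boundaries =
      α.toCompositionAsSet.boundaries ∩ β.toCompositionAsSet.boundaries := by
    have := (compositionEquiv m).apply_symm_apply
      ({ boundaries := α.toCompositionAsSet.boundaries ∩ β.toCompositionAsSet.boundaries
         zero_mem := Finset.mem_inter.2
           ⟨α.toCompositionAsSet.zero_mem, β.toCompositionAsSet.zero_mem⟩
         getLast_mem := Finset.mem_inter.2
           ⟨α.toCompositionAsSet.getLast_mem, β.toCompositionAsSet.getLast_mem⟩ } :
        CompositionAsSet m)
    exact congrArg CompositionAsSet.boundaries this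
  rw [psums, hB, Finset.image_inter _ _ Fin.val_injective]
  rfl

lemma psums_cat {n n' : ℕ} (α : Composition n) (α' : Composition n') :
    (α.cat α').psums = α.psums ∪ α'.psums.image (· + n) := by
  ext k
  have hblocks : (α.cat α').blocks = α.blocks ++ α'.blocks := rfl
  simp only [mem_psums, Finset.mem_union, Finset.mem_image, hblocks]
  constructor
  · rintro ⟨i, hi, rfl⟩
    rw [List.length_append] at hi
    by_cases h : i ≤ α.blocks.length
    · left
      exact ⟨i, h, by rw [List.take_append_of_le_length h]⟩
    · right
      push_neg at h
      obtain ⟨j, rfl⟩ : ∃ j, i = α.blocks.length + j := ⟨i - α.blocks.length, by omega⟩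
      refine ⟨(α'.blocks.take j).sum, ⟨j, by omega, rfl⟩, ?_⟩
      rw [List.take_length_add_append, List.sum_append, α.blocks_sum, add_comm]
  · rintro (⟨i, hi, rfl⟩ | ⟨s, ⟨i, hi, rfl⟩, rfl⟩)
    · exact ⟨i, by rw [List.length_append]; omega,
        by rw [List.take_append_of_le_length hi]⟩
    · refine ⟨α.blocks.length + i, by rw [List.length_append]; omega, ?_⟩
      rw [List.take_length_add_append, List.sum_append, α.blocks_sum, add_comm]

lemma cat_injective {n n' : ℕ} {a b : Composition n} {a' b' : Composition n'}
    (h : a.cat a' = b.cat b') : a = b ∧ a' = b' := by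
  have h' : a.blocks ++ a'.blocks = b.blocks ++ b'.blocks := congrArg Composition.blocks h
  have key : ∀ u v : List ℕ, u <+: v → u.sum = v.sum → (∀ x ∈ v, 0 < x) → u = v := by
    rintro u v ⟨t, rfl⟩ hsum hpos
    have ht : t.sum = 0 := by
      rw [List.sum_append] at hsum
      omega
    have ht0 : t = [] := by
      rcases t with _ | ⟨x, t⟩
      · rfl
      · exfalso
        have hx := hpos x (by simp)
        simp [List.sum_cons] at ht
        omega
    simp [ht0]
  have hpre : a.blocks <+: b.blocks ∨ b.blocks <+: a.blocks :=
    List.prefix_or_prefix_of_prefix ⟨a'.blocks, h'⟩ ⟨b'.blocks, rfl⟩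
  have hab : a.blocks = b.blocks := by
    rcases hpre with hp | hp
    · exact key _ _ hp (by rw [a.blocks_sum, b.blocks_sum]) (fun _ hx => b.blocks_pos hx)
    · exact (key _ _ hp (by rw [a.blocks_sum, b.blocks_sum]) (fun _ hx => a.blocks_pos hx)).symm
  have hab' : a'.blocks = b'.blocks := by
    rw [hab] at h'
    exact List.append_cancel_left h'
  exact ⟨Composition.ext hab, Composition.ext hab'⟩

lemma exists_cat_of_mem_psums {n n' : ℕ} (α : Composition (n + n')) (h : n ∈ α.psums) :
    ∃ x : Composition n × Composition n', α = x.1.cat x.2 := by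
  obtain ⟨i, hi, hsum⟩ := mem_psums.1 h
  have hdrop : (α.blocks.drop i).sum = n' := by
    have h2 : (α.blocks.take i).sum + (α.blocks.drop i).sum = n + n' := by
      rw [← List.sum_append, List.take_append_drop]
      exact α.blocks_sum
    omega
  refine ⟨(⟨α.blocks.take i, fun hx => α.blocks_pos (List.mem_of_mem_take hx), hsum⟩,
    ⟨α.blocks.drop i, fun hx => α.blocks_pos (List.mem_of_mem_drop hx), hdrop⟩), ?_⟩
  exact Composition.ext (List.take_append_drop i α.blocks).symm

/-- Split a composition of `n + n'` into a composition of `n` and a composition of `n'`,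
when possible (junk value otherwise). -/
noncomputable def unCat {n n' : ℕ} (α : Composition (n + n')) :
    Composition n × Composition n' :=
  if h : ∃ x : Composition n × Composition n', α = x.1.cat x.2 then h.choose
  else (Composition.ones n, Composition.ones n')

lemma unCat_cat {n n' : ℕ} (a : Composition n) (a' : Composition n') :
    unCat (a.cat a') = (a, a') := by
  have h : ∃ x : Composition n × Composition n', a.cat a' = x.1.cat x.2 := ⟨(a, a'), rfl⟩
  rw [unCat, dif_pos h]
  obtain ⟨h1, h2⟩ := cat_injective h.choose_spec.symm
  exact Prod.ext h1 h2

lemma meet_cat {n n' : ℕ} (a b : Composition n) (a' b' : Composition n') :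
    (a.cat a').meet (b.cat b') = (a.meet b).cat (a'.meet b') := by
  apply psums_injective
  rw [psums_meet, psums_cat, psums_cat, psums_cat, psums_meet, psums_meet]
  ext k
  simp only [Finset.mem_inter, Finset.mem_union, Finset.mem_image]
  constructor
  · rintro ⟨hA | ⟨x, hx, hxk⟩, hB | ⟨y, hy, hyk⟩⟩
    · exact Or.inl ⟨hA, hB⟩
    · have hk : k = n := le_antisymm (le_of_mem_psums hA) (by omega)
      subst hk
      exact Or.inl ⟨hA, b.top_mem_psums⟩
    · have hk : k = n := le_antisymm (le_of_mem_psums hB) (by omega)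
      subst hk
      exact Or.inl ⟨a.top_mem_psums, hB⟩
    · have hxy : x = y := by omega
      subst hxy
      exact Or.inr ⟨x, ⟨hx, hy⟩, hxk⟩
  · rintro (⟨h1, h2⟩ | ⟨x, ⟨h1, h2⟩, hk⟩)
    · exact ⟨Or.inl h1, Or.inl h2⟩
    · exact ⟨Or.inr ⟨x, h1, hk⟩, Or.inr ⟨x, h2, hk⟩⟩

end Composition

/-- `r̃` is multiplicative with respect to concatenation:
`r̃_{γ·γ'} = r̃_γ · r̃_{γ'}`. -/
theorem rTilde_cat (p q : ℕ → ℝ) {n n' : ℕ} (γ : Composition n) (γ' : Composition n') :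
    rTilde p q (γ.cat γ') = rTilde p q γ * rTilde p q γ' := by
  classical
  have repr : ∀ (m : ℕ) (δ : Composition m), rTilde p q δ =
      ∑ x ∈ Finset.univ.filter (fun x : Composition m × Composition m => x.1.meet x.2 = δ),
        (x.1.blocks.map p).prod * (x.2.blocks.map q).prod := by
    intro m δ
    rw [rTilde, Finset.sum_filter]
  rw [repr _ (γ.cat γ'), repr _ γ, repr _ γ', Finset.sum_mul_sum, ← Finset.sum_product']
  refine (Finset.sum_nbij'
    (i := fun x : (Composition n × Composition n) × (Composition n' × Composition n') =>
      (x.1.1.cat x.2.1, x.1.2.cat x.2.2))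
    (j := fun z : Composition (n + n') × Composition (n + n') =>
      (((Composition.unCat z.1).1, (Composition.unCat z.2).1),
       ((Composition.unCat z.1).2, (Composition.unCat z.2).2)))
    ?_ ?_ ?_ ?_ ?_).symm
  · rintro ⟨⟨a, b⟩, ⟨a', b'⟩⟩ hx
    simp only [Finset.mem_product, Finset.mem_filter, Finset.mem_univ, true_and] at hx
    simp only [Finset.mem_filter, Finset.mem_univ, true_and]
    rw [Composition.meet_cat, hx.1, hx.2]
  · rintro ⟨z1, z2⟩ hz
    simp only [Finset.mem_filter, Finset.mem_univ, true_and] at hz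
    have hmem : (n : ℕ) ∈ z1.psums ∩ z2.psums := by
      rw [← Composition.psums_meet, hz, Composition.psums_cat]
      exact Finset.mem_union_left _ γ.top_mem_psums
    obtain ⟨x1, hx1⟩ := z1.exists_cat_of_mem_psums (Finset.mem_inter.1 hmem).1
    obtain ⟨x2, hx2⟩ := z2.exists_cat_of_mem_psums (Finset.mem_inter.1 hmem).2
    have hmeet : (x1.1.meet x2.1).cat (x1.2.meet x2.2) = γ.cat γ' := by
      rw [← Composition.meet_cat, ← hx1, ← hx2, hz]
    obtain ⟨hm1, hm2⟩ := Composition.cat_injective hmeet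
    simp only [Finset.mem_product, Finset.mem_filter, Finset.mem_univ, true_and]
    rw [hx1, hx2, Composition.unCat_cat, Composition.unCat_cat]
    exact ⟨hm1, hm2⟩
  · rintro ⟨⟨a, b⟩, ⟨a', b'⟩⟩ _
    simp [Composition.unCat_cat]
  · rintro ⟨z1, z2⟩ hz
    simp only [Finset.mem_filter, Finset.mem_univ, true_and] at hz
    have hmem : (n : ℕ) ∈ z1.psums ∩ z2.psums := by
      rw [← Composition.psums_meet, hz, Composition.psums_cat]
      exact Finset.mem_union_left _ γ.top_mem_psums
    obtain ⟨x1, hx1⟩ := z1.exists_cat_of_mem_psums (Finset.mem_inter.1 hmem).1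
    obtain ⟨x2, hx2⟩ := z2.exists_cat_of_mem_psums (Finset.mem_inter.1 hmem).2
    rw [hx1, hx2]
    simp [Composition.unCat_cat]
  · rintro ⟨⟨a, b⟩, ⟨a', b'⟩⟩ _
    have h1 : ((a.cat a').blocks.map p).prod = (a.blocks.map p).prod * (a'.blocks.map p).prod := by
      show (((a.blocks ++ a'.blocks)).map p).prod = _
      rw [List.map_append, List.prod_append]
    have h2 : ((b.cat b').blocks.map q).prod = (b.blocks.map q).prod * (b'.blocks.map q).prod := by
      show (((b.blocks ++ b'.blocks)).map q).prod = _
      rw [List.map_append, List.prod_append]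
    simp only [h1, h2]
    ring
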